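/- Let h : {1, 2, 3, …} → ℚ be any sequence, let G(q,s) = Σ_{n≥1} h_n qⁿ s^{2n−2}/(2n−2)! ∈ ℚ[[q,s]], and let D = q·∂/∂q. If h satisfies the recursion h_{n+1} = Σ_{l=1}^{n} ((2n−1)! · l² · (n+1−l)²) / ((2l−2)! · (2(n−l))! · (n+1)) · h_l · h_{n+1−l} for all n ≥ 1, then G satisfies the once-integrated equation ∂/∂s (DG) = s · (D²G)² in ℚ[[q,s]]. -/

import Mathlib

/-- The Euler-type derivation `D = q·∂/∂q` on `ℚ[[q,s]]`, where the variable `q`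
corresponds to the index `0` and `s` to the index `1`. -/
noncomputable def Dq (F : MvPowerSeries (Fin 2) ℚ) : MvPowerSeries (Fin 2) ℚ :=
  fun m => (m 0 : ℚ) * MvPowerSeries.coeff m F

/-- The formal partial derivative `∂/∂s` on `ℚ[[q,s]]`. -/
noncomputable def Ds (F : MvPowerSeries (Fin 2) ℚ) : MvPowerSeries (Fin 2) ℚ :=
  fun m => ((m 1 : ℚ) + 1) * MvPowerSeries.coeff (m + Finsupp.single 1 1) F

/-- The generating series `G(q,s) = Σ_{n ≥ 1} h_n qⁿ s^{2n−2}/(2n−2)!` in `ℚ[[q,s]]`. -/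
noncomputable def genSeries (h : ℕ → ℚ) : MvPowerSeries (Fin 2) ℚ :=
  fun m => if 1 ≤ m 0 ∧ m 1 = 2 * m 0 - 2
    then h (m 0) / ((2 * m 0 - 2).factorial : ℚ) else 0

lemma fin2_finsupp_eq (f : Fin 2 →₀ ℕ) :
    f = Finsupp.single 0 (f 0) + Finsupp.single 1 (f 1) := by
  ext i; fin_cases i <;> simp [Finsupp.single_apply]

lemma fin2_eval0 (x y : ℕ) :
    ((Finsupp.single (0:Fin 2) x + Finsupp.single 1 y : Fin 2 →₀ ℕ)) 0 = x := by
  simp [Finsupp.single_apply]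

lemma fin2_eval1 (x y : ℕ) :
    ((Finsupp.single (0:Fin 2) x + Finsupp.single 1 y : Fin 2 →₀ ℕ)) 1 = y := by
  simp [Finsupp.single_apply]

lemma coeff_Ds (F : MvPowerSeries (Fin 2) ℚ) (m : Fin 2 →₀ ℕ) :
    MvPowerSeries.coeff m (Ds F) =
      ((m 1 : ℚ) + 1) * MvPowerSeries.coeff (m + Finsupp.single 1 1) F := rfl

lemma coeff_Dq (F : MvPowerSeries (Fin 2) ℚ) (m : Fin 2 →₀ ℕ) :
    MvPowerSeries.coeff m (Dq F) = (m 0 : ℚ) * MvPowerSeries.coeff m F := rfl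

lemma coeff_gen (h : ℕ → ℚ) (m : Fin 2 →₀ ℕ) :
    MvPowerSeries.coeff m (genSeries h) =
      if 1 ≤ m 0 ∧ m 1 = 2 * m 0 - 2
        then h (m 0) / ((2 * m 0 - 2).factorial : ℚ) else 0 := rfl

lemma add_single_eval0 (m : Fin 2 →₀ ℕ) :
    ((m + Finsupp.single 1 1 : Fin 2 →₀ ℕ)) 0 = m 0 := by
  rw [Finsupp.add_apply]; simp [Finsupp.single_apply]

lemma add_single_eval1 (m : Fin 2 →₀ ℕ) :
    ((m + Finsupp.single 1 1 : Fin 2 →₀ ℕ)) 1 = m 1 + 1 := by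
  rw [Finsupp.add_apply]; simp [Finsupp.single_apply]

lemma coeff_DqDq (h : ℕ → ℚ) (p : Fin 2 →₀ ℕ) :
    MvPowerSeries.coeff p (Dq (Dq (genSeries h))) =
      if 1 ≤ p 0 ∧ p 1 = 2 * p 0 - 2
        then ((p 0 : ℚ))^2 * h (p 0) / ((2 * p 0 - 2).factorial : ℚ) else 0 := by
  rw [coeff_Dq, coeff_Dq, coeff_gen]
  split <;> ring

/-- **Once-integrated topological recursion relation for `ℂP¹`.**
If the sequence `h` of rational numbers satisfies the recursion
`h_{n+1} = Σ_{l=1}^{n} ((2n−1)!·l²·(n+1−l)²)/((2l−2)!·(2(n−l))!·(n+1))·h_l·h_{n+1−l}`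
for all `n ≥ 1`, then `G = Σ_{n≥1} h_n qⁿ s^{2n−2}/(2n−2)!` satisfies
`∂/∂s(DG) = s·(D²G)²` in `ℚ[[q,s]]`. -/
theorem recursion_implies_integrated_trr (h : ℕ → ℚ)
    (hrec : ∀ n : ℕ, 1 ≤ n →
      h (n + 1) = ∑ l ∈ Finset.Icc 1 n,
        (((2 * n - 1).factorial : ℚ) * (l : ℚ) ^ 2 * ((n + 1 - l : ℕ) : ℚ) ^ 2) /
            (((2 * l - 2).factorial : ℚ) * ((2 * (n - l)).factorial : ℚ) * ((n : ℚ) + 1)) *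
          h l * h (n + 1 - l)) :
    Ds (Dq (genSeries h)) = MvPowerSeries.X 1 * (Dq (Dq (genSeries h))) ^ 2 := by
  classical
  apply MvPowerSeries.ext
  intro m
  rw [coeff_Ds, coeff_Dq, coeff_gen, add_single_eval0, add_single_eval1]
  set a := m 0 with ha
  set b := m 1 with hb
  clear_value a b
  rw [sq, MvPowerSeries.X_def, MvPowerSeries.coeff_monomial_mul]
  by_cases hc : 1 ≤ a ∧ b + 1 = 2 * a - 2
  · -- main case
    have ha2 : 2 ≤ a := by omega
    have hb1 : 1 ≤ b := by omega
    have hle : Finsupp.single (1 : Fin 2) 1 ≤ m := Finsupp.single_le_iff.mpr (hb ▸ hb1)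
    rw [if_pos hc, if_pos hle, one_mul]
    set m' := m - Finsupp.single (1:Fin 2) 1 with hm'
    have hm'0 : m' 0 = a := by
      rw [hm', Finsupp.tsub_apply]; simp [Finsupp.single_apply, ← ha, ← hb]
    have hm'1 : m' 1 = b - 1 := by
      rw [hm', Finsupp.tsub_apply]; simp [Finsupp.single_apply, ← ha, ← hb]
    rw [MvPowerSeries.coeff_mul]
    set P : ((Fin 2 →₀ ℕ) × (Fin 2 →₀ ℕ)) → Prop := fun p =>
      (1 ≤ p.1 0 ∧ p.1 1 = 2 * p.1 0 - 2) ∧ (1 ≤ p.2 0 ∧ p.2 1 = 2 * p.2 0 - 2) with hP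
    rw [← Finset.sum_filter_of_ne (p := P) (by
      intro p _ hne
      by_contra hnp
      rcases not_and_or.mp hnp with h1 | h2
      · exact hne (by rw [coeff_DqDq h p.1, if_neg h1, zero_mul])
      · exact hne (by rw [coeff_DqDq h p.2, if_neg h2, mul_zero]))]
    rw [Finset.sum_nbij' (i := fun p : (Fin 2 →₀ ℕ) × (Fin 2 →₀ ℕ) => p.1 0)
      (j := fun l => ((Finsupp.single (0:Fin 2) l + Finsupp.single 1 (2*l - 2) : Fin 2 →₀ ℕ),
        (Finsupp.single (0:Fin 2) (a - l) + Finsupp.single 1 (2*(a - l) - 2) : Fin 2 →₀ ℕ)))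
      (t := Finset.Icc 1 (a - 1))
      (g := fun l => ((l:ℚ)^2 * h l / ((2*l-2).factorial : ℚ)) *
        (((a - l : ℕ):ℚ)^2 * h (a - l) / ((2*(a-l)-2).factorial : ℚ)))
      ?_ ?_ ?_ ?_ ?_]
    · -- final numeric identity
      have hn1 : 1 ≤ a - 1 := by omega
      have hhr := hrec (a - 1) hn1
      have haa : a - 1 + 1 = a := by omega
      rw [haa] at hhr
      rw [hhr, Finset.sum_div, Finset.mul_sum, Finset.mul_sum]
      apply Finset.sum_congr rfl
      intro l hl
      rw [Finset.mem_Icc] at hl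
      have e2 : 2 * (a - 1 - l) = 2 * (a - l) - 2 := by omega
      have e3 : 2 * (a - 1) - 1 = 2 * a - 3 := by omega
      have e4 : 2 * a - 2 = (2 * a - 3) + 1 := by omega
      rw [e2, e3, e4, Nat.factorial_succ]
      have hcast : ((a - 1 : ℕ) : ℚ) + 1 = (a : ℚ) := by
        push_cast [Nat.cast_sub (by omega : 1 ≤ a)]; ring
      rw [hcast]
      have hbcast : ((b : ℚ) + 1) = (((2 * a - 3) + 1 : ℕ) : ℚ) := by
        norm_cast; omega
      rw [hbcast]
      have f1 : ((2*l-2).factorial : ℚ) ≠ 0 := Nat.cast_ne_zero.mpr (Nat.factorial_ne_zero _)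
      have f2 : ((2*(a-l)-2).factorial : ℚ) ≠ 0 := Nat.cast_ne_zero.mpr (Nat.factorial_ne_zero _)
      have f3 : ((2*a-3).factorial : ℚ) ≠ 0 := Nat.cast_ne_zero.mpr (Nat.factorial_ne_zero _)
      have f4 : (((2*a-3) + 1 : ℕ) : ℚ) ≠ 0 := by positivity
      have f5 : (a : ℚ) ≠ 0 := Nat.cast_ne_zero.mpr (by omega)
      field_simp
      push_cast
      ring
    · -- hi : image in Icc
      intro p hp
      rw [Finset.mem_filter, Finset.HasAntidiagonal.mem_antidiagonal] at hp
      obtain ⟨hanti, hP1, hP2⟩ := hp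
      have h0 : p.1 0 + p.2 0 = a := by
        have h00 : (p.1 + p.2) 0 = m' 0 := by rw [hanti]
        rwa [Finsupp.add_apply, hm'0] at h00
      simp only [Finset.mem_Icc]
      omega
    · -- hj : preimage in filter
      intro l hl
      rw [Finset.mem_Icc] at hl
      rw [Finset.mem_filter, Finset.HasAntidiagonal.mem_antidiagonal]
      constructor
      · ext i
        fin_cases i
        · show ((_ + _ : Fin 2 →₀ ℕ) + (_ + _ : Fin 2 →₀ ℕ)) 0 = m' 0
          rw [Finsupp.add_apply, fin2_eval0, fin2_eval0, hm'0]; omega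
        · show ((_ + _ : Fin 2 →₀ ℕ) + (_ + _ : Fin 2 →₀ ℕ)) 1 = m' 1
          rw [Finsupp.add_apply, fin2_eval1, fin2_eval1, hm'1]; omega
      · refine ⟨⟨?_, ?_⟩, ?_, ?_⟩ <;>
          simp only [fin2_eval0, fin2_eval1] <;> omega
    · -- left_inv
      intro p hp
      rw [Finset.mem_filter, Finset.HasAntidiagonal.mem_antidiagonal] at hp
      obtain ⟨hanti, hP1, hP2⟩ := hp
      have h0 : p.1 0 + p.2 0 = a := by
        have h00 : (p.1 + p.2) 0 = m' 0 := by rw [hanti]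
        rwa [Finsupp.add_apply, hm'0] at h00
      have hsnd : p.2 0 = a - p.1 0 := by omega
      have e1 : p.1 = Finsupp.single 0 (p.1 0) + Finsupp.single 1 (2 * p.1 0 - 2) := by
        conv_lhs => rw [fin2_finsupp_eq p.1]
        rw [hP1.2]
      have e2 : p.2 = Finsupp.single 0 (a - p.1 0) + Finsupp.single 1 (2 * (a - p.1 0) - 2) := by
        conv_lhs => rw [fin2_finsupp_eq p.2]
        rw [hP2.2, hsnd]
      exact Prod.ext e1.symm e2.symm
    · -- right_inv
      intro l hl
      exact fin2_eval0 _ _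
    · -- term equality
      intro p hp
      rw [Finset.mem_filter, Finset.HasAntidiagonal.mem_antidiagonal] at hp
      obtain ⟨hanti, hP1, hP2⟩ := hp
      have h0 : p.1 0 + p.2 0 = a := by
        have h00 : (p.1 + p.2) 0 = m' 0 := by rw [hanti]
        rwa [Finsupp.add_apply, hm'0] at h00
      have hsnd : p.2 0 = a - p.1 0 := by omega
      rw [coeff_DqDq, coeff_DqDq, if_pos hP1, if_pos hP2, hsnd]
  · -- vanishing case
    rw [if_neg hc, mul_zero, mul_zero]
    by_cases hle : Finsupp.single (1 : Fin 2) 1 ≤ m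
    · rw [if_pos hle, one_mul]
      have hb1 : 1 ≤ b := hb ▸ Finsupp.single_le_iff.mp hle
      set m' := m - Finsupp.single (1:Fin 2) 1 with hm'
      have hm'0 : m' 0 = a := by
        rw [hm', Finsupp.tsub_apply]; simp [Finsupp.single_apply, ← ha, ← hb]
      have hm'1 : m' 1 = b - 1 := by
        rw [hm', Finsupp.tsub_apply]; simp [Finsupp.single_apply, ← ha, ← hb]
      rw [MvPowerSeries.coeff_mul]
      refine (Finset.sum_eq_zero ?_).symm
      intro p hp
      rw [Finset.HasAntidiagonal.mem_antidiagonal] at hp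
      rw [coeff_DqDq, coeff_DqDq]
      split_ifs with h1 h2
      · exfalso
        have h0 : p.1 0 + p.2 0 = a := by
          have h00 : (p.1 + p.2) 0 = m' 0 := by rw [hp]
          rwa [Finsupp.add_apply, hm'0] at h00
        have h1' : p.1 1 + p.2 1 = b - 1 := by
          have h11 : (p.1 + p.2) 1 = m' 1 := by rw [hp]
          rwa [Finsupp.add_apply, hm'1] at h11
        omega
      · exact mul_zero _
      · exact zero_mul _
      · exact zero_mul _
    · rw [if_neg hle]
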